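/- Let P be a real polynomial with natDegree P ≤ 6. Then for all real a, b, with m := (a + b)/2: P(b) − P(a) = (b − a) · ( P'(m) + P'''(m)·(b − a)²/24 + P⁽⁵⁾(m)·(b − a)⁴/1920 ), where P', P''', P⁽⁵⁾ denote the first, third and fifth derivatives of P evaluated at m. -/

import Mathlib

/-- Eq. (6.16): for a polynomial of degree at most 6 the midpoint Taylor surrogate with
first, third and fifth derivatives is exactly consistent with the difference. -/
theorem polynomial_deg_le_six_midpoint_exact
    (P : Polynomial ℝ) (hdeg : P.natDegree ≤ 6) (a b : ℝ) :
    Polynomial.eval b P - Polynomial.eval a P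
      = (b - a) *
          (Polynomial.eval ((a + b) / 2) (Polynomial.derivative P)
            + Polynomial.eval ((a + b) / 2) ((⇑Polynomial.derivative)^[3] P) * (b - a) ^ 2 / 24
            + Polynomial.eval ((a + b) / 2) ((⇑Polynomial.derivative)^[5] P) * (b - a) ^ 4 / 1920) := by
  have h7 : P.natDegree < 7 := lt_of_le_of_lt hdeg (by norm_num)
  rw [Polynomial.as_sum_range' P 7 h7]
  simp only [Function.iterate_succ, Function.iterate_zero, Function.comp_apply, id_eq]
  simp only [Finset.sum_range_succ, Finset.sum_range_zero]
  simp only [map_add, Polynomial.eval_add, map_zero, Polynomial.eval_zero, Polynomial.derivative_monomial, Polynomial.eval_monomial]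
  push_cast
  ring
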